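/- Let p : E → X be a covering map between locally compact Hausdorff topological spaces, and let H : [0,1] × X → X be a continuous map such that for each t ∈ [0,1] the map H(t,·) : X → X is a homeomorphism and H(0,·) = id_X. Then there exists a continuous map H̃ : [0,1] × E → E such that H̃(0,·) = id_E, for all t ∈ [0,1] and e ∈ E one has p(H̃(t,e)) = H(t, p(e)), and for each t ∈ [0,1] the map H̃(t,·) : E → E is a homeomorphism of E. -/

import Mathlib

open Set

theorem local_lift {E X Y : Type*} [TopologicalSpace E] [TopologicalSpace X] [TopologicalSpace Y]
    (p : E → X) (hp : IsCoveringMap p) (G : ℝ × Y → X) (hG : Continuous G)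
    (f : Y → E) (hf : Continuous f) (h0 : ∀ y, p (f y) = G (0, y)) (y₀ : Y) :
    ∃ N : Set Y, IsOpen N ∧ y₀ ∈ N ∧ ∃ L : ℝ × Y → E,
      ContinuousOn L (Set.Icc 0 1 ×ˢ N) ∧ (∀ y ∈ N, L (0, y) = f y) ∧
      ∀ t ∈ Set.Icc (0:ℝ) 1, ∀ y ∈ N, p (L (t, y)) = G (t, y) := by
  classical
  -- pointwise trivializations
  have hrange : IsClopen (range p) := by
    refine ⟨?_, hp.isOpenMap.isOpen_range⟩
    rw [← isOpen_compl_iff, isOpen_iff_forall_mem_open]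
    intro x hx
    obtain ⟨_, U, hxU, hU, _, H, _⟩ := hp x
    refine ⟨U, fun y hy => ?_, hU, hxU⟩
    rintro ⟨e, rfl⟩
    exact hx ⟨(H ⟨e, hy⟩).2.1, (H ⟨e, hy⟩).2.2⟩
  have hfib : ∀ t : ℝ, Nonempty ↑(p ⁻¹' {G (t, y₀)}) := by
    have hS : IsClopen ((fun t : ℝ => G (t, y₀)) ⁻¹' range p) :=
      hrange.preimage (hG.comp (continuous_id.prodMk continuous_const))
    have hSu := hS.eq_univ ⟨0, f y₀, h0 y₀⟩
    intro t
    obtain ⟨e, he⟩ : G (t, y₀) ∈ range p := by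
      have : t ∈ (fun t : ℝ => G (t, y₀)) ⁻¹' range p := by rw [hSu]; trivial
      exact this
    exact ⟨⟨e, he⟩⟩
  have htriv : ∀ t : ℝ, ∃ T : Bundle.Trivialization (↑(p ⁻¹' {G (t, y₀)})) p, G (t, y₀) ∈ T.baseSet :=
    fun t => have := hfib t; ⟨(hp (G (t, y₀))).toTrivialization, (hp (G (t, y₀))).mem_toTrivialization_baseSet⟩
  choose triv hVmem using htriv
  -- tube around each (t, y₀)
  have tube : ∀ t : ℝ, ∃ ε > (0:ℝ), ∃ N : Set Y, IsOpen N ∧ y₀ ∈ N ∧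
      ∀ s ∈ Metric.ball t ε, ∀ y ∈ N, G (s, y) ∈ (triv t).baseSet := by
    intro t
    have hopen : IsOpen (G ⁻¹' (triv t).baseSet) := (triv t).open_baseSet.preimage hG
    obtain ⟨u, v, hu, hv, htu, hyv, huv⟩ :=
      isOpen_prod_iff.mp hopen t y₀ (by exact hVmem t)
    obtain ⟨ε, hε, hball⟩ := Metric.isOpen_iff.mp hu t htu
    exact ⟨ε, hε, v, hv, hyv, fun s hs y hy => huv ⟨hball hs, hy⟩⟩
  choose ε hε N' hN'open hN'mem hN' using tube
  -- compactness
  obtain ⟨F, hF⟩ := (isCompact_Icc (a := (0:ℝ)) (b := 1)).elim_finite_subcover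
    (fun t : ℝ => Metric.ball t (ε t / 2))
    (fun t => Metric.isOpen_ball)
    (fun t ht => mem_iUnion.mpr ⟨t, Metric.mem_ball_self (by linarith [hε t])⟩)
  have hFne : F.Nonempty := by
    by_contra h
    rw [Finset.not_nonempty_iff_eq_empty] at h
    have := hF (left_mem_Icc.mpr zero_le_one)
    simp [h] at this
  set N : Set Y := ⋂ t ∈ F, N' t with hN
  have hNopen : IsOpen N := isOpen_biInter_finset fun t _ => hN'open t
  have hNmem : y₀ ∈ N := mem_iInter₂.mpr fun t _ => hN'mem t
  set δ : ℝ := F.inf' hFne (fun t => ε t / 2) with hδdef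
  have hδpos : 0 < δ := by
    rw [hδdef, Finset.lt_inf'_iff]
    exact fun t _ => by linarith [hε t]
  obtain ⟨n, hn⟩ := exists_nat_one_div_lt hδpos
  set m : ℕ := n + 1 with hm
  have hmpos : (0:ℝ) < m := by positivity
  have hm1 : 1 / (m:ℝ) < δ := by rwa [hm, Nat.cast_add, Nat.cast_one]
  -- chain property
  have chain : ∀ k : ℕ, k < m → ∃ t₀ : ℝ,
      ∀ s ∈ Icc ((k:ℝ)/m) (((k:ℝ)+1)/m), ∀ y ∈ N, G (s, y) ∈ (triv t₀).baseSet := by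
    intro k hk
    have hk1 : ((k:ℝ)+1) ≤ m := by exact_mod_cast Nat.succ_le_of_lt hk
    have hkIcc : (k:ℝ)/m ∈ Icc (0:ℝ) 1 := by
      constructor
      · positivity
      · rw [div_le_one hmpos]; linarith
    obtain ⟨t₀, ht₀F, ht₀⟩ := mem_iUnion₂.mp (hF hkIcc)
    refine ⟨t₀, fun s hs y hy => ?_⟩
    have hδt : δ ≤ ε t₀ / 2 := Finset.inf'_le _ ht₀F
    have hd1 : dist s ((k:ℝ)/m) ≤ 1/m := by
      rw [Real.dist_eq, abs_of_nonneg (by linarith [hs.1])]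
      have h2 := hs.2
      rw [add_div] at h2
      linarith
    have hd2 : dist ((k:ℝ)/m) t₀ < ε t₀ / 2 := ht₀
    have : dist s t₀ < ε t₀ := by
      calc dist s t₀ ≤ dist s ((k:ℝ)/m) + dist ((k:ℝ)/m) t₀ := dist_triangle _ _ _
        _ < 1/m + ε t₀ / 2 := by linarith
        _ ≤ ε t₀ := by linarith
    exact hN' t₀ s this y (by exact mem_iInter₂.mp hy t₀ ht₀F)
  -- inductive construction of the lift on blocks
  have main : ∀ k : ℕ, k ≤ m → ∃ L : ℝ × Y → E,
      ContinuousOn L (Icc 0 ((k:ℝ)/m) ×ˢ N) ∧ (∀ y ∈ N, L (0, y) = f y) ∧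
      ∀ t ∈ Icc (0:ℝ) ((k:ℝ)/m), ∀ y ∈ N, p (L (t, y)) = G (t, y) := by
    intro k
    induction k with
    | zero =>
      intro _
      refine ⟨fun z => f z.2, (hf.comp continuous_snd).continuousOn, fun y _ => rfl, ?_⟩
      intro t ht y _
      have ht0 : t = 0 := le_antisymm (by simpa using ht.2) ht.1
      rw [ht0]; exact h0 y
    | succ k ih =>
      intro hk1
      obtain ⟨L, hLc, hL0, hLp⟩ := ih (Nat.le_of_succ_le hk1)
      obtain ⟨t₀, ht₀⟩ := chain k (Nat.lt_of_succ_le hk1)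
      set a : ℝ := (k:ℝ)/m with ha
      set b : ℝ := ((k:ℝ)+1)/m with hbdef
      have hab : a ≤ b := by
        rw [ha, hbdef, div_le_div_iff_of_pos_right hmpos]
        linarith
      have ha0 : (0:ℝ) ≤ a := by positivity
      set T := triv t₀ with hT
      set φ : Y → E := fun y => L (a, y) with hφ
      have haIcc : a ∈ Icc (0:ℝ) a := ⟨ha0, le_rfl⟩
      have hφp : ∀ y ∈ N, p (φ y) = G (a, y) := fun y hy => hLp a haIcc y hy
      have habSelf : a ∈ Icc a b := ⟨le_rfl, hab⟩
      have hφsrc : ∀ y ∈ N, φ y ∈ T.source := fun y hy =>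
        T.mem_source.mpr (by rw [hφp y hy]; exact ht₀ a habSelf y hy)
      have hφc : ContinuousOn φ N :=
        hLc.comp (continuous_const.prodMk continuous_id).continuousOn
          (fun y hy => ⟨haIcc, hy⟩)
      set Ψ : ℝ × Y → E := fun z => T.toOpenPartialHomeomorph.symm (G z, (T (φ z.2)).2) with hΨdef
      have hΨp : ∀ t ∈ Icc a b, ∀ y ∈ N, p (Ψ (t, y)) = G (t, y) := by
        intro t ht y hy
        exact T.proj_symm_apply (T.mem_target.mpr (ht₀ t ht y hy))
      have hΨa : ∀ y ∈ N, Ψ (a, y) = φ y := by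
        intro y hy
        have h1 : ((G (a, y), (T (φ y)).2) : X × _) = T (φ y) :=
          Prod.ext (by rw [T.coe_fst (hφsrc y hy), hφp y hy]) rfl
        show T.toOpenPartialHomeomorph.symm (G (a, y), (T (φ y)).2) = φ y
        rw [h1]
        exact T.toOpenPartialHomeomorph.left_inv (hφsrc y hy)
      have hΨc : ContinuousOn Ψ (Icc a b ×ˢ N) := by
        have c1 : ContinuousOn (fun y => (T (φ y)).2) N :=
          continuous_snd.comp_continuousOn
            (T.toOpenPartialHomeomorph.continuousOn.comp hφc hφsrc)
        have c2 : ContinuousOn (fun z : ℝ × Y => ((G z, (T (φ z.2)).2) : X × _))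
            (Icc a b ×ˢ N) :=
          hG.continuousOn.prodMk (c1.comp continuous_snd.continuousOn (fun z hz => hz.2))
        exact T.toOpenPartialHomeomorph.continuousOn_symm.comp c2
          (fun z hz => T.mem_target.mpr (ht₀ z.1 hz.1 z.2 hz.2))
      have hcast : (((k+1 : ℕ)):ℝ)/(m:ℝ) = b := by rw [hbdef]; push_cast; ring
      rw [hcast]
      refine ⟨fun z => if z.1 ≤ a then L z else Ψ z, ?_, ?_, ?_⟩
      · -- continuity
        have hsplit : Icc (0:ℝ) b = Icc 0 a ∪ Icc a b := (Icc_union_Icc_eq_Icc ha0 hab).symm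
        rw [hsplit, union_prod]
        have eq1 : EqOn (fun z : ℝ × Y => if z.1 ≤ a then L z else Ψ z) L
            (Icc 0 a ×ˢ N) := fun z hz => if_pos hz.1.2
        have eq2 : EqOn (fun z : ℝ × Y => if z.1 ≤ a then L z else Ψ z) Ψ
            (Icc a b ×ˢ N) := by
          rintro ⟨t, y⟩ hz
          by_cases h : t ≤ a
          · have hta : t = a := le_antisymm h hz.1.1
            subst hta
            simp only [if_pos h]
            rw [hΨa y hz.2]
          · simp only [if_neg h]
        have mem_cl₁ : ∀ z ∈ (Icc 0 a ×ˢ N ∪ Icc a b ×ˢ N),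
            z ∈ closure (Icc 0 a ×ˢ N) → z ∈ Icc 0 a ×ˢ N := by
          intro z hz hcl
          rw [closure_prod_eq] at hcl
          have h1 := hcl.1
          rw [isClosed_Icc.closure_eq] at h1
          exact ⟨h1, by rcases hz with h | h; exacts [h.2, h.2]⟩
        have mem_cl₂ : ∀ z ∈ (Icc 0 a ×ˢ N ∪ Icc a b ×ˢ N),
            z ∈ closure (Icc a b ×ˢ N) → z ∈ Icc a b ×ˢ N := by
          intro z hz hcl
          rw [closure_prod_eq] at hcl
          have h1 := hcl.1
          rw [isClosed_Icc.closure_eq] at h1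
          exact ⟨h1, by rcases hz with h | h; exacts [h.2, h.2]⟩
        intro z hz
        apply ContinuousWithinAt.union
        · by_cases h1 : z ∈ Icc 0 a ×ˢ N
          · exact ((hLc z h1).congr eq1 (eq1 h1))
          · exact continuousWithinAt_of_notMem_closure
              (fun hcl => h1 (mem_cl₁ z hz hcl))
        · by_cases h2 : z ∈ Icc a b ×ˢ N
          · exact ((hΨc z h2).congr eq2 (eq2 h2))
          · exact continuousWithinAt_of_notMem_closure
              (fun hcl => h2 (mem_cl₂ z hz hcl))
      · -- value at 0
        intro y hy
        simp only [if_pos ha0]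
        exact hL0 y hy
      · -- lifting
        intro t ht y hy
        by_cases h : t ≤ a
        · simp only [if_pos h]
          exact hLp t ⟨ht.1, h⟩ y hy
        · simp only [if_neg h]
          exact hΨp t ⟨le_of_not_ge h, ht.2⟩ y hy
  obtain ⟨L, hLc, hL0, hLp⟩ := main m le_rfl
  have hmm : (m:ℝ)/m = 1 := div_self (ne_of_gt hmpos)
  rw [hmm] at hLc hLp
  exact ⟨N, hNopen, hNmem, L, hLc, hL0, hLp⟩

theorem global_lift {E X Y : Type*} [TopologicalSpace E] [TopologicalSpace X] [TopologicalSpace Y]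
    (p : E → X) (hp : IsCoveringMap p) (G : ℝ × Y → X) (hG : Continuous G)
    (f : Y → E) (hf : Continuous f) (h0 : ∀ y, p (f y) = G (0, y)) :
    ∃ L : ℝ × Y → E, ContinuousOn L (Set.Icc 0 1 ×ˢ Set.univ) ∧ (∀ y, L (0, y) = f y) ∧
      ∀ t ∈ Set.Icc (0:ℝ) 1, ∀ y, p (L (t, y)) = G (t, y) := by
  choose N hNopen hNmem L hLc hL0 hLp using local_lift p hp G hG f hf h0
  have path_cont : ∀ (c : Y) (y : Y), y ∈ N c →
      ContinuousOn (fun t : ℝ => L c (t, y)) (Icc 0 1) := by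
    intro c y hy
    exact (hLc c).comp (continuous_id.prodMk continuous_const).continuousOn
      (fun t ht => ⟨ht, hy⟩)
  have uniq : ∀ (c : Y) (y : Y), y ∈ N c →
      EqOn (fun t : ℝ => L y (t, y)) (fun t : ℝ => L c (t, y)) (Icc 0 1) := by
    intro c y hy
    refine hp.eqOn_of_comp_eqOn isPreconnected_Icc
      (path_cont y y (hNmem y)) (path_cont c y hy)
      ?_ (left_mem_Icc.mpr zero_le_one) ?_
    · intro t ht
      show p (L y (t, y)) = p (L c (t, y))
      rw [hLp y t ht y (hNmem y), hLp c t ht y hy]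
    · show L y (0, y) = L c (0, y)
      rw [hL0 y y (hNmem y), hL0 c y hy]
  refine ⟨fun z => L z.2 z, ?_, fun y => hL0 y y (hNmem y),
    fun t ht y => hLp y t ht y (hNmem y)⟩
  intro z hz
  have hnhds : (Set.univ ×ˢ N z.2 : Set (ℝ × Y)) ∈ nhds z :=
    (isOpen_univ.prod (hNopen z.2)).mem_nhds ⟨trivial, hNmem z.2⟩
  rw [← continuousWithinAt_inter hnhds, Set.prod_inter_prod, Set.inter_univ, Set.univ_inter]
  have heq : EqOn (fun w : ℝ × Y => L w.2 w) (L z.2) (Icc 0 1 ×ˢ N z.2) := by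
    rintro ⟨t, y⟩ hw
    exact uniq z.2 y hw.2 hw.1
  have hzmem : z ∈ (Icc 0 1 ×ˢ N z.2 : Set (ℝ × Y)) := ⟨hz.1, hNmem z.2⟩
  exact ((hLc z.2) z hzmem).congr heq (heq hzmem)

/-- **Lifting of paths of homeomorphisms through a covering map.**
Let `p : E → X` be a covering map between locally compact Hausdorff spaces and let
`H : [0,1] × X → X` be a continuous map whose time slices are homeomorphisms of `X`,
with `H 0 = id`. Then `H` lifts to a continuous `H' : [0,1] × E → E` with `H' 0 = id`,
`p ∘ H' t = H t ∘ p`, and each slice `H' t` a homeomorphism of `E`. -/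
theorem path_of_homeomorphisms_lifts
    {E X : Type*} [TopologicalSpace E] [TopologicalSpace X]
    [LocallyCompactSpace E] [T2Space E] [LocallyCompactSpace X] [T2Space X]
    (p : E → X) (hp : IsCoveringMap p)
    (H : unitInterval × X → X) (hH : Continuous H)
    (hslice : ∀ t : unitInterval, IsHomeomorph (fun x => H (t, x)))
    (h0 : ∀ x : X, H (0, x) = x) :
    ∃ H' : unitInterval × E → E, Continuous H' ∧
      (∀ e : E, H' (0, e) = e) ∧
      (∀ (t : unitInterval) (e : E), p (H' (t, e)) = H (t, p e)) ∧
      (∀ t : unitInterval, IsHomeomorph (fun e => H' (t, e))) := by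
  set π : ℝ → unitInterval := fun r => Set.projIcc 0 1 zero_le_one r with hπdef
  have hπc : Continuous π := continuous_projIcc
  have hπcoe : ∀ t : unitInterval, π ↑t = t := fun t => Set.projIcc_of_mem zero_le_one t.2
  have hπ0 : π (0:ℝ) = 0 := hπcoe 0
  obtain ⟨Lg, hc, hL0, hLp⟩ := global_lift p hp (fun z => H (π z.1, p z.2))
    (hH.comp ((hπc.comp continuous_fst).prodMk (hp.continuous.comp continuous_snd)))
    id continuous_id (fun e => by show p e = H (π 0, p e); rw [hπ0, h0 (p e)])
  have hHtp : ∀ (t : unitInterval) (e : E), p (Lg (↑t, e)) = H (t, p e) := by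
    intro t e
    rw [hLp ↑t t.2 e, hπcoe t]
  refine ⟨fun q => Lg (↑q.1, q.2), ?_, fun e => hL0 e, hHtp, ?_⟩
  · exact hc.comp_continuous
      ((continuous_subtype_val.comp continuous_fst).prodMk continuous_snd)
      (fun q => ⟨q.1.2, trivial⟩)
  intro t
  show IsHomeomorph fun e => Lg (↑t, e)
  set Φ := IsHomeomorph.homeomorph _ (hslice t) with hΦdef
  have hΦapp : ∀ x, Φ x = H (t, x) := fun x => rfl
  have hmul : ∀ s : ℝ, s ∈ Set.Icc (0:ℝ) 1 → s * ↑t ∈ Set.Icc (0:ℝ) 1 := by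
    intro s hs
    constructor
    · exact mul_nonneg hs.1 t.2.1
    · nlinarith [t.2.1, t.2.2, hs.1, hs.2]
  have hsub : ∀ s : ℝ, s ∈ Set.Icc (0:ℝ) 1 → 1 - s ∈ Set.Icc (0:ℝ) 1 := by
    intro s hs
    exact ⟨by linarith [hs.2], by linarith [hs.1]⟩
  obtain ⟨M, hMc, hM0, hMp⟩ := global_lift p hp
    (fun z => H (π ((1 - z.1) * ↑t), Φ.symm (p z.2)))
    (hH.comp ((hπc.comp ((continuous_const.sub continuous_fst).mul continuous_const)).prodMk
      (Φ.symm.continuous.comp (hp.continuous.comp continuous_snd))))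
    id continuous_id (fun e => by
      show p e = H (π ((1 - 0) * ↑t), Φ.symm (p e))
      rw [show ((1:ℝ) - 0) * ↑t = (↑t:ℝ) by ring, hπcoe t, ← hΦapp, Φ.apply_symm_apply])
  set C : E → E := fun e => M (1, e) with hCdef
  have hCc : Continuous C := hMc.comp_continuous (continuous_const.prodMk continuous_id)
    (fun e => ⟨⟨zero_le_one, le_rfl⟩, trivial⟩)
  have hCp : ∀ e, p (C e) = Φ.symm (p e) := by
    intro e
    rw [hCdef]
    show p (M (1, e)) = Φ.symm (p e)
    rw [hMp 1 ⟨zero_le_one, le_rfl⟩ e, show ((1:ℝ) - 1) * ↑t = (0:ℝ) by ring, hπ0,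
      h0 (Φ.symm (p e))]
  have cont1 : ∀ e : E, ContinuousOn (fun s : ℝ => Lg (s * ↑t, e)) (Set.Icc 0 1) := fun e =>
    hc.comp ((continuous_id.mul continuous_const).prodMk continuous_const).continuousOn
      (fun s hs => ⟨hmul s hs, trivial⟩)
  have cont2 : ∀ e : E, ContinuousOn (fun s : ℝ => M (1 - s, e)) (Set.Icc 0 1) := fun e =>
    hMc.comp ((continuous_const.sub continuous_id).prodMk continuous_const).continuousOn
      (fun s hs => ⟨hsub s hs, trivial⟩)
  have leftinv : ∀ e, C (Lg (↑t, e)) = e := by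
    intro e
    have key := hp.eqOn_of_comp_eqOn (s := Set.Icc (0:ℝ) 1) isPreconnected_Icc
      (g₁ := fun s => Lg (s * ↑t, e)) (g₂ := fun s => M (1 - s, Lg (↑t, e)))
      (cont1 e) (cont2 (Lg (↑t, e))) ?_ (Set.right_mem_Icc.mpr zero_le_one) ?_
    · have h00 := key (Set.left_mem_Icc.mpr zero_le_one)
      simp only [zero_mul, sub_zero] at h00
      rw [hL0 e] at h00
      exact h00.symm
    · intro s hs
      show p (Lg (s * ↑t, e)) = p (M (1 - s, Lg (↑t, e)))
      rw [hLp (s * ↑t) (hmul s hs) e, hMp (1 - s) (hsub s hs) (Lg (↑t, e)),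
        sub_sub_cancel, hHtp t e, ← hΦapp, Φ.symm_apply_apply]
    · show Lg (1 * ↑t, e) = M (1 - 1, Lg (↑t, e))
      rw [one_mul, show (1:ℝ) - 1 = 0 by ring, hM0]
      rfl
  have rightinv : ∀ e, Lg (↑t, C e) = e := by
    intro e
    have key := hp.eqOn_of_comp_eqOn (s := Set.Icc (0:ℝ) 1) isPreconnected_Icc
      (g₁ := fun s => Lg (s * ↑t, C e)) (g₂ := fun s => M (1 - s, e))
      (cont1 (C e)) (cont2 e) ?_ (Set.left_mem_Icc.mpr zero_le_one) ?_
    · have h11 := key (Set.right_mem_Icc.mpr zero_le_one)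
      simp only [one_mul, sub_self] at h11
      rw [hM0 e] at h11
      exact h11
    · intro s hs
      show p (Lg (s * ↑t, C e)) = p (M (1 - s, e))
      rw [hLp (s * ↑t) (hmul s hs) (C e), hMp (1 - s) (hsub s hs) e, sub_sub_cancel, hCp e]
    · show Lg (0 * ↑t, C e) = M (1 - 0, e)
      rw [zero_mul, show (1:ℝ) - 0 = 1 by ring, hL0]
      rfl
  exact isHomeomorph_iff_exists_inverse.mpr
    ⟨hc.comp_continuous (continuous_const.prodMk continuous_id)
      (fun e => ⟨t.2, trivial⟩), C, leftinv, rightinv, hCc⟩
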